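/- arXiv:2512.10906 — 2 statements merged into one kernel-verified Lean document; each statement's English description precedes it below -/
import Mathlib

section
/- Let r ≥ 0, y₀ ∈ ℝⁿ, C ∈ ℝ^{m×n}, and D ∈ S^m_{++}. For every x ∈ ℝ^m there exists y ∈ ℝⁿ with ‖y−y₀‖₂² ≤ r such that (x+Cy)ᵀD(x+Cy) ≥ r‖CᵀDC‖_∞. Concretely, y = y₀ + α(x)ξ works, where ξ is a unit eigenvector of CᵀDC for its largest eigenvalue and α(x) = √r·sgn((x+Cy₀)ᵀDCξ) with the convention sgn(0) = 1. -/
open Matrix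
open scoped ENNReal

noncomputable def singVals {n : ℕ} (A : Matrix (Fin n) (Fin n) ℝ) : Fin n → ℝ :=
  fun i => Real.sqrt ((show (Aᵀ * A).IsHermitian by simpa using Matrix.isHermitian_conjTranspose_mul_self A).eigenvalues i)

/-- The Schatten `p`-norm of a square real matrix, defined via its singular values. -/
noncomputable def schattenNorm {n : ℕ} (p : ℝ≥0∞) (A : Matrix (Fin n) (Fin n) ℝ) : ℝ :=
  if p = ⊤ then ⨆ i, singVals A i
  else (∑ i, singVals A i ^ p.toReal) ^ (1 / p.toReal)


/-- For every `x ∈ ℝ^m` the point `y = y₀ + α(x) ξ`, with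
`α(x) = √r · sgn((x+Cy₀)ᵀDCξ)` (and `sgn 0 = 1`), is feasible and satisfies
`(x+Cy)ᵀD(x+Cy) ≥ r‖CᵀDC‖_∞`. -/
theorem stmt1 {m n : ℕ} (r : ℝ) (hr : 0 ≤ r) (y₀ : Fin n → ℝ)
    (C : Matrix (Fin m) (Fin n) ℝ) (D : Matrix (Fin m) (Fin m) ℝ) (hD : D.PosDef)
    (ξ : Fin n → ℝ) (hξunit : ∑ i, ξ i ^ 2 = 1)
    (hξeig : (Cᵀ * D * C) *ᵥ ξ = schattenNorm ⊤ (Cᵀ * D * C) • ξ)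
    (x : Fin m → ℝ) (α : ℝ)
    (hα : α = Real.sqrt r *
        (if (x + C *ᵥ y₀) ⬝ᵥ (D *ᵥ (C *ᵥ ξ)) < 0 then (-1 : ℝ) else 1))
    (y : Fin n → ℝ) (hy : y = fun i => y₀ i + α * ξ i) :
    (∑ i, (y i - y₀ i) ^ 2) ≤ r ∧
      r * schattenNorm ⊤ (Cᵀ * D * C) ≤ (x + C *ᵥ y) ⬝ᵥ (D *ᵥ (x + C *ᵥ y)) := by
  set s := schattenNorm ⊤ (Cᵀ * D * C) with hs
  set v := x + C *ᵥ y₀ with hv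
  set w := C *ᵥ ξ with hw
  set t := v ⬝ᵥ (D *ᵥ w) with ht
  have hα2 : α ^ 2 = r := by
    rw [hα]; split_ifs <;> rw [mul_pow] <;> rw [Real.sq_sqrt hr] <;> ring
  have hαt : 0 ≤ α * t := by
    rw [hα]; split_ifs with h
    · have h' : t ≤ 0 := le_of_lt h
      nlinarith [Real.sqrt_nonneg r]
    · push_neg at h
      nlinarith [Real.sqrt_nonneg r]
  constructor
  · have : ∑ i, (y i - y₀ i) ^ 2 = α ^ 2 * ∑ i, ξ i ^ 2 := by
      rw [hy, Finset.mul_sum]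
      apply Finset.sum_congr rfl
      intro i _; ring
    rw [this, hξunit, mul_one, hα2]
  · have hyv : C *ᵥ y = C *ᵥ y₀ + α • w := by
      have : y = y₀ + α • ξ := by funext i; rw [hy]; rfl
      rw [this, mulVec_add, mulVec_smul, hw]
    have hxy : x + C *ᵥ y = v + α • w := by
      rw [hyv, hv]; abel
    have hDt : Dᵀ = D := by
      ext i j; exact hD.isHermitian.apply i j
    have hsym : w ⬝ᵥ (D *ᵥ v) = t := by
      rw [ht, dotProduct_mulVec w D v, ← mulVec_transpose, hDt, dotProduct_comm]
    have hwDw : w ⬝ᵥ (D *ᵥ w) = s := by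
      have h1 : ξ ⬝ᵥ ((Cᵀ * D * C) *ᵥ ξ) = w ⬝ᵥ (D *ᵥ w) := by
        rw [Matrix.mul_assoc, ← mulVec_mulVec, ← mulVec_mulVec,
          dotProduct_mulVec, vecMul_transpose, hw]
      have h2 : ξ ⬝ᵥ ξ = 1 := by
        rw [dotProduct, ← hξunit]
        exact Finset.sum_congr rfl (fun i _ => (sq (ξ i)).symm)
      rw [← h1, hξeig, dotProduct_smul, smul_eq_mul, h2, mul_one]
    have hvDv : 0 ≤ v ⬝ᵥ (D *ᵥ v) := by simpa using hD.posSemidef.dotProduct_mulVec_nonneg v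
    have hexp : (x + C *ᵥ y) ⬝ᵥ (D *ᵥ (x + C *ᵥ y))
        = v ⬝ᵥ (D *ᵥ v) + α * t + α * t + α ^ 2 * s := by
      simp only [hxy, mulVec_add, mulVec_smul, dotProduct_add, add_dotProduct,
        dotProduct_smul, smul_dotProduct, smul_eq_mul, hsym, hwDw, ← ht]
      ring
    rw [hexp, hα2]
    linarith
end

section
/- Let p ∈ (1,∞] and let q ∈ [1,∞) satisfy 1/p + 1/q = 1. Let Σ̂ ∈ S₊ⁿ, r₂ ≥ 0, and let C ∈ S₊ⁿ with C ≠ 0. Define Σ* := Σ̂ + r₂‖C‖_q^{−(q−1)} C^{q−1}, where C^{q−1} is the matrix power defined by the spectral (continuous functional) calculus and with the convention C^{q−1} = I when q = 1 (i.e., p = ∞). Then Σ* ∈ S₊ⁿ, ‖Σ*−Σ̂‖_p = r₂, and tr(Σ*C) = tr(Σ̂C) + r₂‖C‖_q. -/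
open Matrix
open scoped ENNReal

/-- Matrix power of a symmetric matrix via the spectral (continuous functional) calculus:
`A^t := U diag(λᵢ^t) Uᵀ`, using the real power `λ ^ t` (so `A^0 = I`, matching the
convention `C^{q-1} = I` when `q = 1`). -/
noncomputable def herPow {n : ℕ} {A : Matrix (Fin n) (Fin n) ℝ} (hA : A.IsHermitian)
    (t : ℝ) : Matrix (Fin n) (Fin n) ℝ :=
  (hA.eigenvectorUnitary : Matrix (Fin n) (Fin n) ℝ) *
    Matrix.diagonal (fun i => hA.eigenvalues i ^ t) *
    star (hA.eigenvectorUnitary : Matrix (Fin n) (Fin n) ℝ)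

section CharPoly
open Polynomial


lemma charmatrix_diag {n : ℕ} (d : Fin n → ℝ) :
    charmatrix (Matrix.diagonal d) = Matrix.diagonal (fun i => X - C (d i)) := by
  ext i j
  by_cases h : i = j
  · subst h; simp [charmatrix_apply_eq]
  · simp [charmatrix_apply_ne _ _ _ h, Matrix.diagonal_apply_ne _ h, Matrix.diagonal_apply_ne d h]

lemma charpoly_conj_diag {n : ℕ} (U : Matrix.unitaryGroup (Fin n) ℝ) (d : Fin n → ℝ) :
    ((U : Matrix (Fin n) (Fin n) ℝ) * Matrix.diagonal d *
      star (U : Matrix (Fin n) (Fin n) ℝ)).charpoly = ∏ i, (X - C (d i)) := by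
  set V := (U : Matrix (Fin n) (Fin n) ℝ) with hV
  have hU : V * star V = 1 := Matrix.UnitaryGroup.star_mul_self ⟨star V, Unitary.star_mem U.2⟩
  have hU' : star V * V = 1 := Matrix.UnitaryGroup.star_mul_self U
  have hmap1 : V.map C * (star V).map C = 1 := by
    rw [← Matrix.map_mul, hU, Matrix.map_one C (map_zero C) (map_one C)]
  have hmap1' : (star V).map C * V.map C = 1 := by
    rw [← Matrix.map_mul, hU', Matrix.map_one C (map_zero C) (map_one C)]
  have key : charmatrix (V * Matrix.diagonal d * star V)
      = (V.map C) * charmatrix (Matrix.diagonal d) * ((star V).map C) := by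
    rw [charmatrix, charmatrix, Matrix.mul_sub, Matrix.sub_mul]
    congr 1
    · rw [Matrix.scalar_apply, ← Matrix.smul_one_eq_diagonal, mul_smul_comm, mul_one,
        smul_mul_assoc, hmap1]
    · simp only [RingHom.mapMatrix_apply, Matrix.map_mul]
  rw [Matrix.charpoly, key, Matrix.det_mul, Matrix.det_mul, mul_comm, ← mul_assoc,
    ← Matrix.det_mul, hmap1', Matrix.det_one, one_mul, charmatrix_diag, Matrix.det_diagonal]

lemma prod_roots {n : ℕ} (f : Fin n → ℝ) :
    (∏ i, (X - C (f i))).roots = Multiset.map f Finset.univ.val := by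
  rw [← roots_multiset_prod_X_sub_C (Multiset.map f Finset.univ.val)]
  congr 1
  rw [Multiset.map_map, Finset.prod_eq_multiset_prod]
  rfl

lemma eig_multiset {n : ℕ} {M : Matrix (Fin n) (Fin n) ℝ} (hM : M.IsHermitian)
    (U : Matrix.unitaryGroup (Fin n) ℝ) (d : Fin n → ℝ)
    (hMU : M = (U : Matrix (Fin n) (Fin n) ℝ) * Matrix.diagonal d *
      star (U : Matrix (Fin n) (Fin n) ℝ)) :
    Multiset.map hM.eigenvalues Finset.univ.val = Multiset.map d Finset.univ.val := by
  have h1 : M.charpoly = ∏ i, (X - C (d i)) := by rw [hMU]; exact charpoly_conj_diag U d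
  have h2 : M.charpoly = ∏ i, (X - C (hM.eigenvalues i)) := by
    conv_lhs => rw [hM.spectral_theorem]
    have := charpoly_conj_diag hM.eigenvectorUnitary hM.eigenvalues
    simpa using this
  have h3 := congrArg Polynomial.roots (h2.symm.trans h1)
  rwa [prod_roots, prod_roots] at h3

lemma sum_f_eq {n : ℕ} {e d : Fin n → ℝ}
    (h : Multiset.map e Finset.univ.val = Multiset.map d Finset.univ.val) (f : ℝ → ℝ) :
    ∑ i, f (e i) = ∑ i, f (d i) := by
  have := congrArg (fun s => (s.map f).sum) h
  simpa [Multiset.map_map, Finset.sum, Function.comp_def] using this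

lemma exists_of_mem {n : ℕ} {e d : Fin n → ℝ}
    (h : Multiset.map e Finset.univ.val = Multiset.map d Finset.univ.val) (i : Fin n) :
    ∃ j, d j = e i := by
  have : e i ∈ Multiset.map d Finset.univ.val := by
    rw [← h]; exact Multiset.mem_map.2 ⟨i, Finset.mem_univ i, rfl⟩
  obtain ⟨j, -, hj⟩ := Multiset.mem_map.1 this
  exact ⟨j, hj⟩

end CharPoly

section helpers
variable {n : ℕ} (U : Matrix.unitaryGroup (Fin n) ℝ)

local notation "V" => (U : Matrix (Fin n) (Fin n) ℝ)

lemma conjdiag_mul (a b : Fin n → ℝ) :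
    (V * Matrix.diagonal a * star V) * (V * Matrix.diagonal b * star V)
      = V * Matrix.diagonal (fun i => a i * b i) * star V := by
  have hU' : star V * V = 1 := Matrix.UnitaryGroup.star_mul_self U
  calc (V * Matrix.diagonal a * star V) * (V * Matrix.diagonal b * star V)
      = V * Matrix.diagonal a * (star V * V) * Matrix.diagonal b * star V := by
        simp only [Matrix.mul_assoc]
    _ = V * (Matrix.diagonal a * Matrix.diagonal b) * star V := by
        rw [hU']; simp only [Matrix.mul_one, Matrix.mul_assoc]
    _ = V * Matrix.diagonal (fun i => a i * b i) * star V := by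
        rw [Matrix.diagonal_mul_diagonal]

lemma conjdiag_trace (a : Fin n → ℝ) :
    (V * Matrix.diagonal a * star V).trace = ∑ i, a i := by
  rw [Matrix.trace_mul_cycle, Matrix.UnitaryGroup.star_mul_self U, Matrix.one_mul,
    Matrix.trace_diagonal]

lemma conjdiag_smul (c : ℝ) (a : Fin n → ℝ) :
    c • (V * Matrix.diagonal a * star V) = V * Matrix.diagonal (fun i => c * a i) * star V := by
  rw [show (fun i => c * a i) = c • a from rfl, Matrix.diagonal_smul]
  simp only [Matrix.mul_smul, Matrix.smul_mul]

lemma conjdiag_posSemidef (a : Fin n → ℝ) (ha : ∀ i, 0 ≤ a i) :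
    (V * Matrix.diagonal a * star V).PosSemidef := by
  have : (Matrix.diagonal a).PosSemidef := Matrix.PosSemidef.diagonal ha
  simpa [Matrix.star_eq_conjTranspose] using this.mul_mul_conjTranspose_same V

lemma conjdiag_herm (a : Fin n → ℝ) :
    (V * Matrix.diagonal a * star V).IsHermitian := by
  simp [Matrix.IsHermitian, Matrix.conjTranspose_mul, Matrix.mul_assoc,
    Matrix.diagonal_conjTranspose, Matrix.star_eq_conjTranspose,
    Matrix.conjTranspose_eq_transpose_of_trivial, Matrix.transpose_transpose]

lemma conjdiag_transpose (a : Fin n → ℝ) :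
    (V * Matrix.diagonal a * star V)ᵀ = V * Matrix.diagonal a * star V := by
  rw [← Matrix.conjTranspose_eq_transpose_of_trivial]
  exact conjdiag_herm U a

end helpers

/-- For `p ∈ (1,∞]`, `q ∈ [1,∞)` with `1/p + 1/q = 1`, PSD `Σ̂`,
`r₂ ≥ 0`, and PSD `C ≠ 0`, the matrix `Σ⋆ := Σ̂ + r₂‖C‖_q^{-(q-1)} C^{q-1}` is PSD,
satisfies `‖Σ⋆-Σ̂‖_p = r₂` and `tr(Σ⋆C) = tr(Σ̂C) + r₂‖C‖_q`. -/
theorem stmt3 {n : ℕ} (p q : ℝ≥0∞) (hp : 1 < p) (hq : 1 ≤ q) (hq' : q ≠ ⊤)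
    (hpq : p⁻¹ + q⁻¹ = 1)
    (Sighat C : Matrix (Fin n) (Fin n) ℝ) (hSig : Sighat.PosSemidef) (hC : C.PosSemidef)
    (hC0 : C ≠ 0) (r₂ : ℝ) (hr₂ : 0 ≤ r₂)
    (Sigstar : Matrix (Fin n) (Fin n) ℝ)
    (hSigstar : Sigstar = Sighat +
        (r₂ * schattenNorm q C ^ (-(q.toReal - 1))) • herPow hC.1 (q.toReal - 1)) :
    Sigstar.PosSemidef ∧ schattenNorm p (Sigstar - Sighat) = r₂ ∧
      (Sigstar * C).trace = (Sighat * C).trace + r₂ * schattenNorm q C := by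
  classical
  have hC1 : C.IsHermitian := hC.1
  set Q : ℝ := q.toReal with hQdef
  set t : ℝ := Q - 1 with htdef
  set lam : Fin n → ℝ := hC1.eigenvalues with hlamdef
  set U := hC1.eigenvectorUnitary with hUdef
  set V : Matrix (Fin n) (Fin n) ℝ := (U : Matrix (Fin n) (Fin n) ℝ) with hVdef
  have hCspec : C = V * Matrix.diagonal lam * star V := by
    have := hC1.spectral_theorem
    simpa [hVdef, hUdef, hlamdef] using this
  have hlam0 : ∀ i, 0 ≤ lam i := fun i => hC.eigenvalues_nonneg i
  haveI hnn : Nonempty (Fin n) := by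
    rcases Nat.eq_zero_or_pos n with h0 | h0
    · exfalso; apply hC0; subst h0; ext i; exact i.elim0
    · exact ⟨⟨0, h0⟩⟩
  have hq0 : q ≠ 0 := fun h => by simp [h] at hq
  have hp0 : p ≠ 0 := (zero_lt_one.trans hp).ne'
  have hQ1 : 1 ≤ Q := by simpa using ENNReal.toReal_mono hq' hq
  have hQ0 : 0 < Q := lt_of_lt_of_le one_pos hQ1
  -- singular values of C
  have hCt : Cᵀ = C := by
    rw [← Matrix.conjTranspose_eq_transpose_of_trivial]; exact hC1
  have hCC : Cᵀ * C = V * Matrix.diagonal (fun i => lam i * lam i) * star V := by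
    rw [hCt]
    conv_lhs => rw [hCspec]
    exact conjdiag_mul U lam lam
  have hmsC := eig_multiset (show (Cᵀ * C).IsHermitian by simpa using Matrix.isHermitian_conjTranspose_mul_self C) U _ hCC
  have hsumC : ∀ r : ℝ, (∑ i, singVals C i ^ r) = ∑ i, lam i ^ r := by
    intro r
    have h := sum_f_eq hmsC (fun x => Real.sqrt x ^ r)
    calc ∑ i, singVals C i ^ r
        = ∑ i, Real.sqrt (lam i * lam i) ^ r := h
      _ = ∑ i, lam i ^ r := by
          refine Finset.sum_congr rfl fun i _ => ?_
          rw [Real.sqrt_mul_self (hlam0 i)]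
  set NQ : ℝ := ∑ i, lam i ^ Q with hNQdef
  have hNC : schattenNorm q C = NQ ^ (1/Q) := by
    rw [schattenNorm, if_neg hq', hsumC]
  have hNQpos : 0 < NQ := by
    obtain ⟨i, hi⟩ : ∃ i, lam i ≠ 0 := by
      by_contra h
      push_neg at h
      apply hC0
      rw [hCspec, funext h]
      simp
    refine Finset.sum_pos' (fun j _ => Real.rpow_nonneg (hlam0 j) _)
      ⟨i, Finset.mem_univ i, Real.rpow_pos_of_pos (lt_of_le_of_ne (hlam0 i) (Ne.symm hi)) _⟩
  set N : ℝ := NQ ^ (1/Q) with hNdef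
  have hNpos : 0 < N := Real.rpow_pos_of_pos hNQpos _
  have hNQ : N ^ Q = NQ := by
    rw [hNdef, ← Real.rpow_mul hNQpos.le, one_div_mul_cancel (ne_of_gt hQ0), Real.rpow_one]
  set c : ℝ := r₂ * N ^ (-t) with hcdef
  have hc0 : 0 ≤ c := mul_nonneg hr₂ (Real.rpow_nonneg hNpos.le _)
  have hD : herPow hC.1 t = V * Matrix.diagonal (fun i => lam i ^ t) * star V := rfl
  -- Part 1 : PSD
  have hpos : Sigstar.PosSemidef := by
    rw [hSigstar]
    refine hSig.add ?_
    rw [hD]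
    rw [conjdiag_smul]
    exact conjdiag_posSemidef U _ (fun i =>
      mul_nonneg (mul_nonneg hr₂ (Real.rpow_nonneg (by rw [hNC]; exact hNpos.le) _))
        (Real.rpow_nonneg (hlam0 i) _))
  -- difference
  have hA : Sigstar - Sighat = V * Matrix.diagonal (fun i => c * lam i ^ t) * star V := by
    rw [hSigstar, add_sub_cancel_left, hD, conjdiag_smul, hNC, hcdef]
  have hAt : (Sigstar - Sighat)ᵀ * (Sigstar - Sighat) =
      V * Matrix.diagonal (fun i => (c * lam i ^ t) * (c * lam i ^ t)) * star V := by
    conv_lhs => rw [hA]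
    rw [conjdiag_transpose, conjdiag_mul]
  have hmsA := eig_multiset (show ((Sigstar - Sighat)ᵀ * (Sigstar - Sighat)).IsHermitian by
          simpa using Matrix.isHermitian_conjTranspose_mul_self (Sigstar - Sighat)) U _ hAt
  refine ⟨hpos, ?_, ?_⟩
  · -- Schatten norm of the difference
    by_cases hptop : p = ⊤
    · have hq1 : q = 1 := by
        rw [hptop] at hpq
        simpa using hpq
      have hQ1' : Q = 1 := by rw [hQdef, hq1]; simp
      have ht0 : t = 0 := by rw [htdef, hQ1']; ring
      have heig : ∀ i, (show ((Sigstar - Sighat)ᵀ * (Sigstar - Sighat)).IsHermitian by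
          simpa using Matrix.isHermitian_conjTranspose_mul_self (Sigstar - Sighat)).eigenvalues i
          = c * c := by
        intro i
        obtain ⟨j, hj⟩ := exists_of_mem hmsA i
        rw [ht0, Real.rpow_zero, mul_one] at hj
        exact hj.symm
      rw [schattenNorm, if_pos hptop]
      have hsv : ∀ i, singVals (Sigstar - Sighat) i = c := by
        intro i
        show Real.sqrt _ = c
        rw [heig i, Real.sqrt_mul_self hc0]
      rw [funext hsv, ciSup_const, hcdef, ht0, neg_zero, Real.rpow_zero, mul_one]
    · have hP1 : 1 < p.toReal := by
        rw [← ENNReal.toReal_one]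
        exact (ENNReal.toReal_lt_toReal ENNReal.one_ne_top hptop).2 hp
      set P : ℝ := p.toReal with hPdef
      have hP0 : 0 < P := lt_trans one_pos hP1
      have hconj : P⁻¹ + Q⁻¹ = 1 := by
        have h := congrArg ENNReal.toReal hpq
        rw [ENNReal.toReal_add (by simp [hp0]) (by simp [hq0]), ENNReal.toReal_inv,
          ENNReal.toReal_inv, ENNReal.toReal_one] at h
        exact h
      have hPQ : Q + P = P * Q := by
        field_simp at hconj
        linarith
      have htP : t * P = Q := by
        rw [htdef]
        nlinarith [hPQ]
      rw [schattenNorm, if_neg hptop]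
      have hsum : ∑ i, singVals (Sigstar - Sighat) i ^ P = c ^ P * NQ := by
        have h := sum_f_eq hmsA (fun x => Real.sqrt x ^ P)
        calc ∑ i, singVals (Sigstar - Sighat) i ^ P
            = ∑ i, Real.sqrt ((c * lam i ^ t) * (c * lam i ^ t)) ^ P := h
          _ = ∑ i, c ^ P * lam i ^ Q := by
              refine Finset.sum_congr rfl fun i _ => ?_
              rw [Real.sqrt_mul_self (mul_nonneg hc0 (Real.rpow_nonneg (hlam0 i) t)),
                Real.mul_rpow hc0 (Real.rpow_nonneg (hlam0 i) t),
                ← Real.rpow_mul (hlam0 i), htP]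
          _ = c ^ P * NQ := by rw [← Finset.mul_sum]
      rw [hsum, Real.mul_rpow (Real.rpow_nonneg hc0 P) (le_of_lt hNQpos),
        ← Real.rpow_mul hc0, mul_one_div_cancel (ne_of_gt hP0), Real.rpow_one,
        ← hNQ, ← Real.rpow_mul hNpos.le, hcdef, mul_assoc, ← Real.rpow_add hNpos]
      have h0 : -t + Q * (1/P) = 0 := by
        field_simp
        nlinarith [htP]
      rw [h0, Real.rpow_zero, mul_one]
  · -- trace identity
    have hDC : herPow hC.1 t * C = V * Matrix.diagonal (fun i => lam i ^ t * lam i) * star V := by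
      rw [hD]
      conv_lhs => rw [hCspec]
      exact conjdiag_mul U _ lam
    rw [hSigstar, Matrix.add_mul, Matrix.trace_add, Matrix.smul_mul, Matrix.trace_smul, hDC,
      conjdiag_trace]
    congr 1
    have hsum : ∑ i, lam i ^ t * lam i = NQ := by
      rw [hNQdef]
      refine Finset.sum_congr rfl fun i _ => ?_
      rcases eq_or_lt_of_le (hlam0 i) with h0 | h0
      · rw [← h0, mul_zero, Real.zero_rpow (ne_of_gt hQ0)]
      · rw [show Q = t + 1 by rw [htdef]; ring, Real.rpow_add_one (ne_of_gt h0)]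
    rw [hNC, hsum, smul_eq_mul, mul_assoc, ← hNQ, ← Real.rpow_add hNpos]
    have h1 : -t + Q = 1 := by rw [htdef]; ring
    rw [h1, Real.rpow_one]
end
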